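/- (Morse–Hedlund) A two-sided sequence u ∈ 𝒜^ℤ over a finite alphabet 𝒜 is periodic (there exists p ≥ 1 with u_{i+p} = u_i for all i ∈ ℤ) if and only if there exists k ≥ 1 with p_u(k+1) = p_u(k), and this holds if and only if there exists n ≥ 1 with p_u(n) ≤ n. -/

import Mathlib

/-- The complexity function of a two-sided sequence `u : ℤ → A`: the number of distinct
blocks of length `n` occurring in `u`. -/
noncomputable def complexityZ {A : Type*} (u : ℤ → A) (n : ℕ) : ℕ :=
  {w : Fin n → A | ∃ i : ℤ, ∀ j : Fin n, w j = u (i + (j : ℤ))}.ncard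

namespace MHaux

set_option linter.unusedSectionVars false

variable {A : Type*} [Fintype A] (u : ℤ → A)

def blk (n : ℕ) (i : ℤ) : Fin n → A := fun j => u (i + (j : ℤ))

def Fct (n : ℕ) : Set (Fin n → A) := {w | ∃ i : ℤ, ∀ j : Fin n, w j = u (i + (j : ℤ))}

lemma complexity_eq (n : ℕ) : complexityZ u n = (Fct u n).ncard := rfl

lemma blk_mem (n : ℕ) (i : ℤ) : blk u n i ∈ Fct u n := ⟨i, fun _ => rfl⟩

lemma mem_iff {n : ℕ} {w : Fin n → A} : w ∈ Fct u n ↔ ∃ i : ℤ, w = blk u n i := by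
  constructor
  · rintro ⟨i, h⟩; exact ⟨i, funext h⟩
  · rintro ⟨i, rfl⟩; exact blk_mem u n i

lemma fct_finite (n : ℕ) : (Fct u n).Finite := Set.toFinite _

def rlast (n : ℕ) (w : Fin (n + 1) → A) : Fin n → A := fun j => w j.castSucc

def rfirst (n : ℕ) (w : Fin (n + 1) → A) : Fin n → A := fun j => w j.succ

lemma rlast_blk (n : ℕ) (i : ℤ) : rlast n (blk u (n + 1) i) = blk u n i := by
  funext j; simp [rlast, blk]

lemma rfirst_blk (n : ℕ) (i : ℤ) : rfirst n (blk u (n + 1) i) = blk u n (i + 1) := by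
  funext j
  simp only [rfirst, blk, Fin.val_succ]
  congr 1
  push_cast
  ring

lemma image_rlast (n : ℕ) : rlast n '' Fct u (n + 1) = Fct u n := by
  apply Set.eq_of_subset_of_subset
  · rintro w ⟨v, hv, rfl⟩
    rcases (mem_iff u).1 hv with ⟨i, rfl⟩
    rw [rlast_blk]; exact blk_mem u n i
  · intro w hw
    rcases (mem_iff u).1 hw with ⟨i, rfl⟩
    exact ⟨blk u (n + 1) i, blk_mem u (n + 1) i, rlast_blk u n i⟩

lemma image_rfirst (n : ℕ) : rfirst n '' Fct u (n + 1) = Fct u n := by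
  apply Set.eq_of_subset_of_subset
  · rintro w ⟨v, hv, rfl⟩
    rcases (mem_iff u).1 hv with ⟨i, rfl⟩
    rw [rfirst_blk]; exact blk_mem u n (i + 1)
  · intro w hw
    rcases (mem_iff u).1 hw with ⟨i, rfl⟩
    refine ⟨blk u (n + 1) (i - 1), blk_mem u (n + 1) _, ?_⟩
    rw [rfirst_blk]; norm_num

lemma complexity_mono (n : ℕ) : complexityZ u n ≤ complexityZ u (n + 1) := by
  rw [complexity_eq, complexity_eq, ← image_rlast u n]
  exact Set.ncard_image_le (fct_finite u (n + 1))

lemma complexity_pos (n : ℕ) : 1 ≤ complexityZ u n := by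
  rw [complexity_eq]
  exact (Set.ncard_pos (fct_finite u n)).2 ⟨blk u n 0, blk_mem u n 0⟩

lemma per_shift {p : ℤ} (hp : ∀ i : ℤ, u (i + p) = u i) :
    ∀ (m i : ℤ), u (i + m * p) = u i := by
  intro m
  induction m using Int.induction_on with
  | zero => simp
  | succ m ih =>
    intro i
    have h1 : i + ((m : ℤ) + 1) * p = (i + m * p) + p := by ring
    rw [h1, hp (i + m * p), ih i]
  | pred m ih =>
    intro i
    have h1 : (i + (-(m : ℤ) - 1) * p) + p = i + (-(m : ℤ)) * p := by ring
    have := hp (i + (-(m : ℤ) - 1) * p)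
    rw [h1, ih i] at this
    rw [← this]

lemma complexity_le_of_periodic {p : ℕ} (hp1 : 1 ≤ p)
    (hp : ∀ i : ℤ, u (i + (p : ℤ)) = u i) (n : ℕ) : complexityZ u n ≤ p := by
  have hppos : (0 : ℤ) < (p : ℤ) := by exact_mod_cast hp1
  have hsub : Fct u n ⊆ Set.range (fun t : Fin p => blk u n ((t : ℕ) : ℤ)) := by
    intro w hw
    rcases (mem_iff u).1 hw with ⟨i, rfl⟩
    have h0 : 0 ≤ i % (p : ℤ) := Int.emod_nonneg i (by omega)
    have h1 : i % (p : ℤ) < (p : ℤ) := Int.emod_lt_of_pos i hppos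
    refine ⟨⟨(i % (p : ℤ)).toNat, by omega⟩, ?_⟩
    show blk u n (((i % (p : ℤ)).toNat : ℤ)) = blk u n i
    rw [Int.toNat_of_nonneg h0]
    funext j
    show u (i % (p : ℤ) + (j : ℤ)) = u (i + (j : ℤ))
    have key : i + (j : ℤ) = (i % (p : ℤ) + (j : ℤ)) + (i / (p : ℤ)) * (p : ℤ) := by
      have := Int.emod_add_mul_ediv i (p : ℤ)
      linarith
    rw [key, per_shift u hp]
  calc complexityZ u n ≤ (Set.range (fun t : Fin p => blk u n ((t : ℕ) : ℤ))).ncard :=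
        Set.ncard_le_ncard hsub (Set.toFinite _)
    _ ≤ p := by
        rw [← Set.image_univ]
        refine le_trans (Set.ncard_image_le (Set.toFinite _)) ?_
        rw [Set.ncard_univ]
        simp

lemma periodic_of_eq {k : ℕ} (hk : 1 ≤ k)
    (h : complexityZ u (k + 1) = complexityZ u k) :
    ∃ p : ℕ, 1 ≤ p ∧ ∀ i : ℤ, u (i + (p : ℤ)) = u i := by
  have hinj1 : Set.InjOn (rlast k) (Fct u (k + 1)) :=
    Set.injOn_of_ncard_image_eq (by rw [image_rlast]; exact h.symm) (fct_finite u (k + 1))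
  have hinj2 : Set.InjOn (rfirst k) (Fct u (k + 1)) :=
    Set.injOn_of_ncard_image_eq (by rw [image_rfirst]; exact h.symm) (fct_finite u (k + 1))
  have fwd : ∀ i i' : ℤ, blk u k i = blk u k i' → blk u k (i + 1) = blk u k (i' + 1) := by
    intro i i' hii
    have hbig : blk u (k + 1) i = blk u (k + 1) i' :=
      hinj1 (blk_mem _ _ _) (blk_mem _ _ _) (by rw [rlast_blk, rlast_blk]; exact hii)
    calc blk u k (i + 1) = rfirst k (blk u (k + 1) i) := (rfirst_blk u k i).symm
      _ = rfirst k (blk u (k + 1) i') := by rw [hbig]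
      _ = blk u k (i' + 1) := rfirst_blk u k i'
  have bwd : ∀ i i' : ℤ, blk u k i = blk u k i' → blk u k (i - 1) = blk u k (i' - 1) := by
    intro i i' hii
    have hbig : blk u (k + 1) (i - 1) = blk u (k + 1) (i' - 1) := by
      refine hinj2 (blk_mem _ _ _) (blk_mem _ _ _) ?_
      rw [rfirst_blk, rfirst_blk]
      have e1 : i - 1 + 1 = i := by ring
      have e2 : i' - 1 + 1 = i' := by ring
      rw [e1, e2]; exact hii
    calc blk u k (i - 1) = rlast k (blk u (k + 1) (i - 1)) := (rlast_blk u k (i - 1)).symm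
      _ = rlast k (blk u (k + 1) (i' - 1)) := by rw [hbig]
      _ = blk u k (i' - 1) := rlast_blk u k (i' - 1)
  have shift : ∀ i i' : ℤ, blk u k i = blk u k i' →
      ∀ t : ℤ, blk u k (i + t) = blk u k (i' + t) := by
    intro i i' hii t
    induction t using Int.induction_on with
    | zero => simpa using hii
    | succ m ih =>
      have e1 : i + ((m : ℤ) + 1) = (i + m) + 1 := by ring
      have e2 : i' + ((m : ℤ) + 1) = (i' + m) + 1 := by ring
      rw [e1, e2]; exact fwd _ _ ih
    | pred m ih =>
      have e1 : i + (-(m : ℤ) - 1) = (i + (-(m : ℤ))) - 1 := by ring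
      have e2 : i' + (-(m : ℤ) - 1) = (i' + (-(m : ℤ))) - 1 := by ring
      rw [e1, e2]; exact bwd _ _ ih
  obtain ⟨x, y, hxy, hbe⟩ := Finite.exists_ne_map_eq_of_infinite (fun m : ℕ => blk u k (m : ℤ))
  have main : ∀ x y : ℕ, x < y → blk u k (x : ℤ) = blk u k (y : ℤ) →
      ∃ p : ℕ, 1 ≤ p ∧ ∀ i : ℤ, u (i + (p : ℤ)) = u i := by
    intro x y hlt hb
    refine ⟨y - x, by omega, fun i => ?_⟩
    have := shift (x : ℤ) (y : ℤ) hb (i - (x : ℤ))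
    have e1 : (x : ℤ) + (i - (x : ℤ)) = i := by ring
    have e2 : (y : ℤ) + (i - (x : ℤ)) = i + ((y : ℤ) - (x : ℤ)) := by ring
    rw [e1, e2] at this
    have e3 : ((y - x : ℕ) : ℤ) = (y : ℤ) - (x : ℤ) := by omega
    rw [e3]
    have := congrFun this (⟨0, hk⟩ : Fin k)
    simp only [blk] at this
    norm_num at this
    exact this.symm
  rcases lt_or_gt_of_ne hxy with hlt | hlt
  · exact main x y hlt hbe
  · exact main y x hlt hbe.symm

lemma periodic_of_one (h : complexityZ u 1 = 1) :
    ∃ p : ℕ, 1 ≤ p ∧ ∀ i : ℤ, u (i + (p : ℤ)) = u i := by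
  rcases Set.ncard_eq_one.1 h with ⟨a, ha⟩
  have ha' : Fct u 1 = {a} := ha
  have hb : ∀ i : ℤ, u i = a 0 := by
    intro i
    have hm : blk u 1 i ∈ Fct u 1 := blk_mem u 1 i
    rw [ha'] at hm
    have := congrFun hm (0 : Fin 1)
    simpa [blk] using this
  exact ⟨1, le_refl 1, fun i => by rw [Nat.cast_one, hb (i + 1), hb i]⟩

lemma grow (hstrict : ∀ k : ℕ, 1 ≤ k → complexityZ u k < complexityZ u (k + 1)) :
    ∀ m : ℕ, complexityZ u 1 + m ≤ complexityZ u (1 + m) := by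
  intro m
  induction m with
  | zero => simp
  | succ m ih =>
    have h1 := hstrict (1 + m) (by omega)
    have : 1 + (m + 1) = (1 + m) + 1 := by omega
    rw [this]
    omega

end MHaux

/-- Morse–Hedlund: a two-sided sequence over a finite alphabet is periodic
iff `p_u(k+1) = p_u(k)` for some `k ≥ 1`, iff `p_u(n) ≤ n` for some `n ≥ 1`. -/
theorem morse_hedlund_two_sided {A : Type*} [Fintype A] (u : ℤ → A) :
    ((∃ p : ℕ, 1 ≤ p ∧ ∀ i : ℤ, u (i + (p : ℤ)) = u i) ↔
      (∃ k : ℕ, 1 ≤ k ∧ complexityZ u (k + 1) = complexityZ u k)) ∧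
    ((∃ p : ℕ, 1 ≤ p ∧ ∀ i : ℤ, u (i + (p : ℤ)) = u i) ↔
      (∃ n : ℕ, 1 ≤ n ∧ complexityZ u n ≤ n)) := by
  have hstrict_of_no : (¬ ∃ k : ℕ, 1 ≤ k ∧ complexityZ u (k + 1) = complexityZ u k) →
      ∀ k : ℕ, 1 ≤ k → complexityZ u k < complexityZ u (k + 1) := by
    intro hno k hk
    push_neg at hno
    exact lt_of_le_of_ne (MHaux.complexity_mono u k) (fun he => hno k hk he.symm)
  constructor
  · constructor
    · rintro ⟨p, hp1, hp⟩
      by_contra hno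
      have hst := hstrict_of_no hno
      have hg := MHaux.grow u hst p
      have hb := MHaux.complexity_le_of_periodic u hp1 hp (1 + p)
      have h1 := MHaux.complexity_pos u 1
      omega
    · rintro ⟨k, hk1, hk⟩
      exact MHaux.periodic_of_eq u hk1 hk
  · constructor
    · rintro ⟨p, hp1, hp⟩
      exact ⟨p, hp1, MHaux.complexity_le_of_periodic u hp1 hp p⟩
    · rintro ⟨n, hn1, hle⟩
      by_cases hx : ∃ k : ℕ, 1 ≤ k ∧ complexityZ u (k + 1) = complexityZ u k
      · obtain ⟨k, hk1, hk⟩ := hx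
        exact MHaux.periodic_of_eq u hk1 hk
      · by_cases h1 : complexityZ u 1 = 1
        · exact MHaux.periodic_of_one u h1
        · exfalso
          have hst := hstrict_of_no hx
          have hg := MHaux.grow u hst (n - 1)
          have he : 1 + (n - 1) = n := by omega
          rw [he] at hg
          have hp1 := MHaux.complexity_pos u 1
          omega
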